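/- Let R = ℤ[λ_{i,j} : 1 ≤ i ≤ n, 1 ≤ j ≤ N]/(λ_{i,j}²−1), and let f ∈ R have type (a₁,...,aₙ; b), meaning f is a sum of monomials each of type (a₁,...,aₙ; b). If every aᵢ is odd and b < n, then the sum of all evaluations of f under substitutions λ_{i,j} ↦ ±1 (over all sign choices) is zero. -/
import Mathlib


/-- Length of a monomial with exponent function `f` on the variables `λ_{i,j}`
(`1 ≤ i ≤ n`, `1 ≤ j ≤ N`): the number of variables appearing in the canonical
squarefree form, i.e. the number of variables with odd exponent. -/
def mlength (n N : ℕ) (f : Fin n × Fin N → ℕ) : ℕ :=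
  (Finset.univ.filter fun v => Odd (f v)).card

/-- A monomial with exponent function `d` has type `(a; b)` if `d = e + f` with
`Σ_j e (i,j) = a i` for each `i`, and `f` of length at most `b`. -/
def MonoType (n N : ℕ) (d : Fin n × Fin N → ℕ) (a : Fin n → ℕ) (b : ℕ) : Prop :=
  ∃ e f : Fin n × Fin N → ℕ, d = e + f ∧
    (∀ i : Fin n, ∑ j : Fin N, e (i, j) = a i) ∧ mlength n N f ≤ b

/-- if `f ∈ R = ℤ[λ_{i,j}]/(λ_{i,j}²−1)` is a sum of monomials of type
`(a₁,...,aₙ; b)` with every `aᵢ` odd and `b < n`, then the sum of all evaluations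
of `f` under all sign choices `λ_{i,j} ↦ ±1` is zero. -/
theorem stmt5 (n N : ℕ) (a : Fin n → ℕ) (b : ℕ)
    (f : MvPolynomial (Fin n × Fin N) ℤ)
    (hf : ∀ d ∈ f.support, MonoType n N (⇑d) a b)
    (ha : ∀ i, Odd (a i)) (hb : b < n) :
    ∑ ε : Fin n × Fin N → ℤˣ, MvPolynomial.eval (fun v => ((ε v : ℤ))) f = 0 := by
  have key : ∀ d ∈ f.support, ∃ v, Odd (d v) := by
    intro d hd
    obtain ⟨e, g, hde, he, hg⟩ := hf d hd
    by_contra h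
    push_neg at h
    have hodd : ∀ i : Fin n, ∃ j, Odd (g (i, j)) := by
      intro i
      by_contra hc
      push_neg at hc
      have heodd : Odd (∑ j, e (i, j)) := he i ▸ ha i
      have : ∀ j : Fin N, Even (e (i, j)) := by
        intro j
        have h1 := h (i, j)
        have h2 := hc j
        have : d (i, j) = e (i, j) + g (i, j) := by rw [hde]; rfl
        simp [Nat.not_odd_iff_even] at h1 h2
        rw [this] at h1
        rcases Nat.even_add.mp h1 with h3
        exact h3.mpr h2
      exact (Nat.not_odd_iff_even.mpr (Finset.even_sum _ fun j _ => this j)) heodd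
    choose j hj using hodd
    have hinj : Function.Injective (fun i : Fin n => (i, j i)) := by
      intro i₁ i₂ h; exact (Prod.mk.injEq _ _ _ _ ▸ h).1
    have hle : n ≤ mlength n N g := by
      have : Finset.univ.image (fun i : Fin n => (i, j i)) ⊆
          Finset.univ.filter fun v => Odd (g v) := by
        intro v hv
        simp only [Finset.mem_image, Finset.mem_univ, true_and] at hv
        obtain ⟨i, rfl⟩ := hv
        simp [hj i]
      calc n = (Finset.univ.image (fun i : Fin n => (i, j i))).card := by
            rw [Finset.card_image_of_injective _ hinj, Finset.card_univ, Fintype.card_fin]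
        _ ≤ _ := Finset.card_le_card this
    omega
  simp only [MvPolynomial.eval_eq']
  rw [Finset.sum_comm]
  apply Finset.sum_eq_zero
  intro d hd
  rw [← Finset.mul_sum]
  obtain ⟨v, hv⟩ := key d hd
  have hz : ∑ ε : Fin n × Fin N → ℤˣ, ∏ w, ((ε w : ℤ)) ^ (d w) = 0 := by
    rw [← Fintype.piFinset_univ]
    have hps : ∏ w : Fin n × Fin N, ∑ u : ℤˣ, ((u : ℤ)) ^ (d w)
        = ∑ ε ∈ Fintype.piFinset (fun _ => (Finset.univ : Finset ℤˣ)),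
          ∏ w, ((ε w : ℤ)) ^ (d w) :=
      Finset.prod_univ_sum _ _
    rw [← hps]
    apply Finset.prod_eq_zero (Finset.mem_univ v)
    have : (Finset.univ : Finset ℤˣ) = {1, -1} := by decide
    rw [this]
    simp [hv.neg_one_pow]
  rw [hz, mul_zero]
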